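/- For the dissipator 𝓛_L with L = e^{-iκx̂} f(p̂) where f is a bounded real-valued function, the expectation of momentum in a state ρ evolves under 𝓛 as Tr(p̂ 𝓛_L[ρ]) = −ℏκ Tr(f(p̂)² ρ). In particular the induced friction force F(p) = −ℏκ f(p)² is a function of momentum alone. -/
import Mathlib


/- STATEMENT 4: For 𝓛_L with L = e^{-iκx̂} f(p̂), f bounded real-valued,
   Tr(p̂ 𝓛_L[ρ]) = −ℏκ Tr(f(p̂)² ρ); equivalently, in Heisenberg form,
   𝓛ᵀ_L[p̂] = −ℏκ f(p̂)², so the friction force F(p) = −ℏκ f(p)² depends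
   on momentum alone.  Momentum representation as before. -/

noncomputable section

/-- Momentum operator: multiplication by `p`. -/
def momOp (ψ : ℝ → ℂ) : ℝ → ℂ := fun p => (p : ℂ) * ψ p

/-- L = e^{-iκx̂} f(p̂), with f real-valued. -/
def jumpL (ℏ κ : ℝ) (f : ℝ → ℝ) (ψ : ℝ → ℂ) : ℝ → ℂ :=
  fun p => (f (p + ℏ * κ) : ℂ) * ψ (p + ℏ * κ)

/-- L†. -/
def jumpLdag (ℏ κ : ℝ) (f : ℝ → ℝ) (ψ : ℝ → ℂ) : ℝ → ℂ :=
  fun p => (f p : ℂ) * ψ (p - ℏ * κ)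

/-- Heisenberg (adjoint) form of the dissipator: 𝓛ᵀ[h] = L†hL − ½{L†L, h}. -/
def lindbladT (ℏ κ : ℝ) (f : ℝ → ℝ) (h : (ℝ → ℂ) → (ℝ → ℂ)) : (ℝ → ℂ) → (ℝ → ℂ) :=
  fun ψ =>
    jumpLdag ℏ κ f (h (jumpL ℏ κ f ψ))
      - (1/2 : ℂ) • (jumpLdag ℏ κ f (jumpL ℏ κ f (h ψ)) + h (jumpLdag ℏ κ f (jumpL ℏ κ f ψ)))

theorem friction_force_momentum_only (ℏ κ : ℝ) (hℏ : 0 < ℏ) (f : ℝ → ℝ)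
    (hf : Measurable f) (hfb : ∃ M : ℝ, ∀ p, |f p| ≤ M) :
    ∀ ψ : ℝ → ℂ, ∀ p : ℝ,
      lindbladT ℏ κ f momOp ψ p = ((-(ℏ * κ) * (f p) ^ 2 : ℝ) : ℂ) * ψ p := by
  intro ψ p
  simp only [lindbladT, jumpL, jumpLdag, momOp, Pi.sub_apply, Pi.smul_apply, Pi.add_apply,
    smul_eq_mul, sub_add_cancel]
  push_cast
  ring

end
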